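/- Weak-type (1,1) level-set estimate, case ρ > 0 (from the proof of Lemma 1): Let α > −1/2, k > 0, k₂ > 0, and let w : ℝ₊ → ℝ be measurable with 0 ≤ w(x) ≤ k₂ x² for 0 < x ≤ k and 0 ≤ w(x) ≤ k₂ x^{2α+1} for x > k. Define g(x) = x³ for 0 < x ≤ k and g(x) = x^{2(α+1)} for x > k. Then there is a constant c > 0 depending only on α, k and k₂ such that for all λ > 0 and M > 0, ∫_{{x > 0 : g(x) M > λ}} w(x) (g(x))^{−2} dx ≤ c M/λ. -/

import Mathlib

open MeasureTheory Set

/-- **Weak-type (1,1) level-set estimate, case ρ > 0** (from the proof of Lemma 1 of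
"Generalized Fourier transform on Chébli-Trimèche hypergroups").
Let `α > -1/2`, `k > 0`, `k₂ > 0`, and let `w : ℝ₊ → ℝ` be measurable with
`0 ≤ w x ≤ k₂ * x ^ 2` for `0 < x ≤ k` and `0 ≤ w x ≤ k₂ * x ^ (2α+1)` for `x > k`.
With `g x = x ^ 3` for `0 < x ≤ k` and `g x = x ^ (2(α+1))` for `x > k`, there is a
constant `c > 0` (depending only on `α`, `k` and `k₂`) such that for all `λ > 0` and
`M > 0`, `∫_{x > 0 : g x * M > λ} w x * (g x)⁻² dx ≤ c * M / λ`. -/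
theorem weak_type_levelset_rho_pos (α k k₂ : ℝ) (hα : -(1/2) < α)
    (hk : 0 < k) (hk₂ : 0 < k₂) :
    ∃ c > (0 : ℝ), ∀ w : ℝ → ℝ, Measurable w →
      (∀ x : ℝ, 0 < x → x ≤ k → 0 ≤ w x ∧ w x ≤ k₂ * x ^ (2 : ℝ)) →
      (∀ x : ℝ, k < x → 0 ≤ w x ∧ w x ≤ k₂ * x ^ (2 * α + 1)) →
      ∀ lam > (0 : ℝ), ∀ M > (0 : ℝ),
        ∫⁻ x in {x : ℝ | 0 < x ∧
              lam < (if x ≤ k then x ^ (3 : ℝ) else x ^ (2 * (α + 1))) * M},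
            ENNReal.ofReal
              (w x * (if x ≤ k then x ^ (3 : ℝ) else x ^ (2 * (α + 1))) ^ (-(2 : ℝ)))
          ≤ ENNReal.ofReal (c * M / lam) := by
  have hβ : (0:ℝ) < 2 * α + 2 := by linarith
  refine ⟨k₂ / 3 + k₂ / (2 * α + 2), by positivity, ?_⟩
  intro w hw hw1 hw2 lam hlam M hM
  have hr : (0:ℝ) < lam / M := div_pos hlam hM
  set t := (lam / M) ^ ((3:ℝ)⁻¹) with ht
  set s := (lam / M) ^ ((2 * α + 2)⁻¹) with hs
  have htpos : 0 < t := Real.rpow_pos_of_pos hr _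
  have hspos : 0 < s := Real.rpow_pos_of_pos hr _
  set m := max k s with hm
  have hmpos : 0 < m := lt_of_lt_of_le hk (le_max_left _ _)
  -- t ^ (-3) = M / lam
  have ht3 : t ^ (-(3:ℝ)) = M / lam := by
    rw [ht, ← Real.rpow_mul hr.le,
      show ((3:ℝ)⁻¹ * -(3:ℝ)) = -1 by norm_num, Real.rpow_neg_one, inv_div]
  -- s ^ (-(2α+2)) = M / lam
  have hs3 : s ^ (-(2 * α + 2)) = M / lam := by
    rw [hs, ← Real.rpow_mul hr.le,
      show ((2 * α + 2)⁻¹ * -(2 * α + 2)) = -1 by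
        rw [mul_neg, inv_mul_cancel₀ hβ.ne'], Real.rpow_neg_one, inv_div]
  -- set inclusion
  have hsub : {x : ℝ | 0 < x ∧
        lam < (if x ≤ k then x ^ (3:ℝ) else x ^ (2 * (α + 1))) * M}
      ⊆ Ioc t k ∪ Ioi m := by
    rintro x ⟨hx0, hxl⟩
    by_cases hxk : x ≤ k
    · left
      rw [if_pos hxk] at hxl
      have h1 : lam / M < x ^ (3:ℝ) := (div_lt_iff₀ hM).2 hxl
      have h2 : t < (x ^ (3:ℝ)) ^ ((3:ℝ)⁻¹) :=
        Real.rpow_lt_rpow hr.le h1 (by norm_num)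
      rw [← Real.rpow_mul hx0.le, show ((3:ℝ) * (3:ℝ)⁻¹) = 1 by norm_num,
        Real.rpow_one] at h2
      exact ⟨h2, hxk⟩
    · right
      push_neg at hxk
      rw [if_neg (not_le.2 hxk)] at hxl
      have h1 : lam / M < x ^ (2 * (α + 1)) := (div_lt_iff₀ hM).2 hxl
      have h2 : s < (x ^ (2 * (α + 1))) ^ ((2 * α + 2)⁻¹) := by
        rw [hs, show (2 * (α + 1)) = 2 * α + 2 by ring] at *
        exact Real.rpow_lt_rpow hr.le h1 (by positivity)
      rw [← Real.rpow_mul hx0.le,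
        show ((2 * (α + 1)) * (2 * α + 2)⁻¹) = 1 by rw [show (2 * (α + 1)) = 2 * α + 2 by ring]; exact mul_inv_cancel₀ hβ.ne',
        Real.rpow_one] at h2
      exact max_lt hxk h2
  refine le_trans (lintegral_mono_set hsub) ?_
  refine le_trans (lintegral_union_le _ _ _) ?_
  -- first piece
  have meas1 : Measurable fun x : ℝ => ENNReal.ofReal (k₂ * x ^ (-(4:ℝ))) := by
    fun_prop
  have piece1 : (∫⁻ x in Ioc t k,
      ENNReal.ofReal
        (w x * (if x ≤ k then x ^ (3:ℝ) else x ^ (2 * (α + 1))) ^ (-(2:ℝ))))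
      ≤ ENNReal.ofReal (k₂ / 3 * (M / lam)) := by
    have step : (∫⁻ x in Ioc t k,
        ENNReal.ofReal
          (w x * (if x ≤ k then x ^ (3:ℝ) else x ^ (2 * (α + 1))) ^ (-(2:ℝ))))
        ≤ ∫⁻ x in Ioc t k, ENNReal.ofReal (k₂ * x ^ (-(4:ℝ))) := by
      refine setLIntegral_mono meas1 fun x hx => ?_
      have hx0 : 0 < x := htpos.trans hx.1
      rw [if_pos hx.2]
      refine ENNReal.ofReal_le_ofReal ?_
      have e1 : (x ^ (3:ℝ)) ^ (-(2:ℝ)) = x ^ (-(6:ℝ)) := by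
        rw [← Real.rpow_mul hx0.le]; norm_num
      calc w x * (x ^ (3:ℝ)) ^ (-(2:ℝ))
          ≤ k₂ * x ^ (2:ℝ) * x ^ (-(6:ℝ)) := by
            rw [e1]
            exact mul_le_mul_of_nonneg_right (hw1 x hx0 hx.2).2
              (Real.rpow_nonneg hx0.le _)
        _ = k₂ * x ^ (-(4:ℝ)) := by
            rw [mul_assoc, ← Real.rpow_add hx0]; norm_num
    refine step.trans ?_
    refine le_trans (lintegral_mono_set Ioc_subset_Ioi_self) ?_
    have hint : IntegrableOn (fun x : ℝ => k₂ * x ^ (-(4:ℝ))) (Ioi t) :=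
      (integrableOn_Ioi_rpow_of_lt (by norm_num) htpos).const_mul k₂
    have hnn : 0 ≤ᵐ[volume.restrict (Ioi t)] fun x : ℝ => k₂ * x ^ (-(4:ℝ)) := by
      filter_upwards [ae_restrict_mem measurableSet_Ioi] with x hx
      exact mul_nonneg hk₂.le (Real.rpow_nonneg (htpos.trans hx).le _)
    rw [← ofReal_integral_eq_lintegral_ofReal hint hnn]
    refine ENNReal.ofReal_le_ofReal (le_of_eq ?_)
    rw [MeasureTheory.integral_const_mul, integral_Ioi_rpow_of_lt (by norm_num) htpos,
      show (-(4:ℝ) + 1) = -(3:ℝ) by norm_num, ht3]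
    ring
  -- second piece
  have ha : (-(2 * α + 3) : ℝ) < -1 := by linarith
  have meas2 : Measurable fun x : ℝ => ENNReal.ofReal (k₂ * x ^ (-(2 * α + 3))) := by
    fun_prop
  have piece2 : (∫⁻ x in Ioi m,
      ENNReal.ofReal
        (w x * (if x ≤ k then x ^ (3:ℝ) else x ^ (2 * (α + 1))) ^ (-(2:ℝ))))
      ≤ ENNReal.ofReal (k₂ / (2 * α + 2) * (M / lam)) := by
    have step : (∫⁻ x in Ioi m,
        ENNReal.ofReal
          (w x * (if x ≤ k then x ^ (3:ℝ) else x ^ (2 * (α + 1))) ^ (-(2:ℝ))))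
        ≤ ∫⁻ x in Ioi m, ENNReal.ofReal (k₂ * x ^ (-(2 * α + 3))) := by
      refine setLIntegral_mono meas2 fun x hx => ?_
      have hxk : k < x := (le_max_left _ _).trans_lt hx
      have hx0 : 0 < x := hk.trans hxk
      rw [if_neg (not_le.2 hxk)]
      refine ENNReal.ofReal_le_ofReal ?_
      have e1 : (x ^ (2 * (α + 1))) ^ (-(2:ℝ)) = x ^ ((2 * (α + 1)) * -(2:ℝ)) := by
        rw [← Real.rpow_mul hx0.le]
      calc w x * (x ^ (2 * (α + 1))) ^ (-(2:ℝ))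
          ≤ k₂ * x ^ (2 * α + 1) * x ^ ((2 * (α + 1)) * -(2:ℝ)) := by
            rw [e1]
            exact mul_le_mul_of_nonneg_right (hw2 x hxk).2
              (Real.rpow_nonneg hx0.le _)
        _ = k₂ * x ^ (-(2 * α + 3)) := by
            rw [mul_assoc, ← Real.rpow_add hx0,
              show ((2 * α + 1) + (2 * (α + 1)) * -(2:ℝ)) = -(2 * α + 3) by ring]
    refine step.trans ?_
    have hint : IntegrableOn (fun x : ℝ => k₂ * x ^ (-(2 * α + 3))) (Ioi m) :=
      (integrableOn_Ioi_rpow_of_lt ha hmpos).const_mul k₂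
    have hnn : 0 ≤ᵐ[volume.restrict (Ioi m)]
        fun x : ℝ => k₂ * x ^ (-(2 * α + 3)) := by
      filter_upwards [ae_restrict_mem measurableSet_Ioi] with x hx
      exact mul_nonneg hk₂.le (Real.rpow_nonneg (hmpos.trans hx).le _)
    rw [← ofReal_integral_eq_lintegral_ofReal hint hnn]
    refine ENNReal.ofReal_le_ofReal ?_
    rw [MeasureTheory.integral_const_mul, integral_Ioi_rpow_of_lt ha hmpos,
      show (-(2 * α + 3) + 1) = -(2 * α + 2) by ring]
    have hmle : m ^ (-(2 * α + 2)) ≤ M / lam := by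
      rw [← hs3]
      exact Real.rpow_le_rpow_of_nonpos hspos (le_max_right _ _) (by linarith)
    rw [show k₂ * (-m ^ (-(2 * α + 2)) / -(2 * α + 2))
        = k₂ / (2 * α + 2) * m ^ (-(2 * α + 2)) by rw [neg_div_neg_eq]; ring]
    exact mul_le_mul_of_nonneg_left hmle (by positivity)
  calc _ ≤ ENNReal.ofReal (k₂ / 3 * (M / lam))
        + ENNReal.ofReal (k₂ / (2 * α + 2) * (M / lam)) := add_le_add piece1 piece2
    _ = ENNReal.ofReal ((k₂ / 3 + k₂ / (2 * α + 2)) * M / lam) := by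
        rw [← ENNReal.ofReal_add (by positivity) (by positivity)]
        ring_nf
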